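/- For every c > 0 and every integer p ≥ 1, the p-th moment of the Marchenko–Pastur measure π_c is given by ∫ x^p dπ_c(x) = Σ_{k=1}^{p} (1/p)·binom(p,k)·binom(p,k−1)·c^k, i.e. the Narayana polynomial evaluated at c. -/

import Mathlib

open MeasureTheory

/-- The density of the absolutely continuous part of the Marchenko–Pastur
distribution with parameter `c`: `√(4c - (x-1-c)²)/(2πx)` on the interval
`[1+c-2√c, 1+c+2√c]`, and `0` elsewhere. -/
noncomputable def mpDensity (c : ℝ) (x : ℝ) : ℝ :=
  if 1 + c - 2 * Real.sqrt c ≤ x ∧ x ≤ 1 + c + 2 * Real.sqrt c then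
    Real.sqrt (4 * c - (x - 1 - c) ^ 2) / (2 * Real.pi * x)
  else 0

/-- The Marchenko–Pastur measure with parameter `c`:
`π_c = max(1-c,0)·δ₀ + mpDensity c · Lebesgue`. -/
noncomputable def mpMeasure (c : ℝ) : Measure ℝ :=
  ENNReal.ofReal (max (1 - c) 0) • Measure.dirac 0 +
    volume.withDensity fun x => ENNReal.ofReal (mpDensity c x)

open intervalIntegral Real Set

namespace MP

variable {c : ℝ}

/-- shorthand -/
noncomputable def KK (c : ℝ) (q : ℕ) : ℝ :=
  ∫ x in (1 + c - 2*Real.sqrt c)..(1 + c + 2*Real.sqrt c),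
    x ^ q * Real.sqrt (4*c - (x - (1+c))^2)

lemma sqrtc_sq (hc : 0 < c) : Real.sqrt c ^ 2 = c := Real.sq_sqrt hc.le

lemma g_pos (hc : 0 < c) {x : ℝ}
    (hx : x ∈ Ioo (1 + c - 2*Real.sqrt c) (1 + c + 2*Real.sqrt c)) :
    0 < 4*c - (x - (1+c))^2 := by
  obtain ⟨h1, h2⟩ := hx
  nlinarith [sqrtc_sq hc, Real.sqrt_nonneg c]

lemma g_cont : Continuous fun x : ℝ => Real.sqrt (4*c - (x - (1+c))^2) := by
  exact (continuous_const.sub ((continuous_id.sub continuous_const).pow 2)).sqrt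

lemma ftc (hc : 0 < c) (n : ℕ) :
    ∫ x in (1 + c - 2*Real.sqrt c)..(1 + c + 2*Real.sqrt c),
      ((n:ℝ) * x ^ (n-1) * (4*c - (x - (1+c))^2) * Real.sqrt (4*c - (x - (1+c))^2)
        - 3 * x ^ n * (x - (1+c)) * Real.sqrt (4*c - (x - (1+c))^2)) = 0 := by
  set a := 1 + c - 2*Real.sqrt c with ha
  set b := 1 + c + 2*Real.sqrt c with hb
  have hab : a ≤ b := by
    have := Real.sqrt_nonneg c; simp only [ha, hb]; linarith
  set g : ℝ → ℝ := fun x => 4*c - (x - (1+c))^2 with hg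
  set F : ℝ → ℝ := fun x => x ^ n * Real.sqrt (g x) ^ 3 with hF
  have hga : g a = 0 := by
    simp only [hg, ha]; nlinarith [sqrtc_sq hc]
  have hgb : g b = 0 := by
    simp only [hg, hb]; nlinarith [sqrtc_sq hc]
  have hcont : ContinuousOn F (Icc a b) :=
    ((continuous_pow n).mul (g_cont.pow 3)).continuousOn
  have hderiv : ∀ x ∈ Ioo a b, HasDerivWithinAt F
      ((n:ℝ) * x ^ (n-1) * (g x) * Real.sqrt (g x)
        - 3 * x ^ n * (x - (1+c)) * Real.sqrt (g x)) (Ioi x) x := by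
    intro x hx
    have hgx : 0 < g x := g_pos hc hx
    have hs : Real.sqrt (g x) ≠ 0 := ne_of_gt (Real.sqrt_pos.2 hgx)
    have hdg : HasDerivAt g (-(2 * (x - (1+c)))) x := by
      have : HasDerivAt (fun x : ℝ => (x - (1+c))^2) (2 * (x - (1+c))^1 * 1) x :=
        ((hasDerivAt_id x).sub_const (1+c)).pow 2
      simpa using (this.const_sub (4*c))
    have hds : HasDerivAt (fun x => Real.sqrt (g x))
        (-(2 * (x - (1+c))) / (2 * Real.sqrt (g x))) x := hdg.sqrt (ne_of_gt hgx)
    have hd3 : HasDerivAt (fun x => Real.sqrt (g x) ^ 3)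
        (3 * Real.sqrt (g x) ^ 2 * (-(2 * (x - (1+c))) / (2 * Real.sqrt (g x)))) x := by
      simpa using hds.fun_pow 3
    have hdF : HasDerivAt F
        ((n:ℝ) * x ^ (n-1) * Real.sqrt (g x) ^ 3
          + x ^ n * (3 * Real.sqrt (g x) ^ 2 * (-(2 * (x - (1+c))) / (2 * Real.sqrt (g x))))) x :=
      (hasDerivAt_pow n x).mul hd3
    have heq : (n:ℝ) * x ^ (n-1) * Real.sqrt (g x) ^ 3
          + x ^ n * (3 * Real.sqrt (g x) ^ 2 * (-(2 * (x - (1+c))) / (2 * Real.sqrt (g x))))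
        = (n:ℝ) * x ^ (n-1) * (g x) * Real.sqrt (g x)
          - 3 * x ^ n * (x - (1+c)) * Real.sqrt (g x) := by
      have h2 : Real.sqrt (g x) ^ 2 = g x := Real.sq_sqrt hgx.le
      have key : ∀ (s gv u A B : ℝ), s ≠ 0 → s ^ 2 = gv →
          A * s ^ 3 + B * (3 * s ^ 2 * (-(2 * u) / (2 * s))) = A * gv * s - 3 * B * u * s := by
        intro s gv u A B hs h2
        rw [← h2]
        field_simp
        ring
      exact key _ _ _ _ _ hs h2
    rw [heq] at hdF
    exact hdF.hasDerivWithinAt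
  have hint : IntervalIntegrable (fun x => (n:ℝ) * x ^ (n-1) * (g x) * Real.sqrt (g x)
        - 3 * x ^ n * (x - (1+c)) * Real.sqrt (g x)) volume a b := by
    apply Continuous.intervalIntegrable
    have : Continuous g := continuous_const.sub ((continuous_id.sub continuous_const).pow 2)
    exact (((continuous_const.mul (continuous_pow _)).mul this).mul g_cont).sub
      (((continuous_const.mul (continuous_pow n)).mul (continuous_id.sub continuous_const)).mul g_cont)
  have := integral_eq_sub_of_hasDeriv_right_of_le hab hcont hderiv hint
  rw [this, hF]
  simp [hga, hgb]


lemma intK (hc : 0 < c) (q : ℕ) :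
    IntervalIntegrable (fun x => x ^ q * Real.sqrt (4*c - (x - (1+c))^2)) volume
      (1 + c - 2*Real.sqrt c) (1 + c + 2*Real.sqrt c) :=
  ((continuous_pow q).mul g_cont).intervalIntegrable _ _

lemma KK_rec (hc : 0 < c) (m : ℕ) :
    ((m:ℝ)+4) * KK c (m+2)
      = (2*(m:ℝ)+5)*(1+c)*KK c (m+1) + ((m:ℝ)+1)*(4*c - (1+c)^2) * KK c m := by
  have h := ftc hc (m+1)
  set a := 1 + c - 2*Real.sqrt c
  set b := 1 + c + 2*Real.sqrt c
  have e : Set.EqOn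
      (fun x : ℝ => ((m:ℝ)+1)*(4*c - (1+c)^2) * (x ^ m * Real.sqrt (4*c - (x - (1+c))^2))
        + ((2*(m:ℝ)+5)*(1+c)) * (x ^ (m+1) * Real.sqrt (4*c - (x - (1+c))^2))
        - ((m:ℝ)+4) * (x ^ (m+2) * Real.sqrt (4*c - (x - (1+c))^2)))
      (fun x : ℝ => (((m+1:ℕ)):ℝ) * x ^ ((m+1)-1) * (4*c - (x - (1+c))^2) * Real.sqrt (4*c - (x - (1+c))^2)
        - 3 * x ^ (m+1) * (x - (1+c)) * Real.sqrt (4*c - (x - (1+c))^2))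
      (Set.uIcc a b) := by
    intro x _
    simp only [Nat.add_sub_cancel]
    push_cast
    ring
  rw [← intervalIntegral.integral_congr e] at h
  rw [intervalIntegral.integral_sub (((intK hc m).const_mul _).add ((intK hc (m+1)).const_mul _))
        ((intK hc (m+2)).const_mul _),
      intervalIntegral.integral_add ((intK hc m).const_mul _) ((intK hc (m+1)).const_mul _),
      intervalIntegral.integral_const_mul, intervalIntegral.integral_const_mul,
      intervalIntegral.integral_const_mul] at h
  simp only [KK]
  linarith [h]

lemma KK_zero (hc : 0 < c) : KK c 0 = 2 * Real.pi * c := by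
  have hs := sqrtc_sq hc
  have hr : (0:ℝ) < 2 * Real.sqrt c := by positivity
  have hrne : (2 * Real.sqrt c) ≠ 0 := ne_of_gt hr
  have hinv : ((2 * Real.sqrt c)⁻¹ : ℝ) ≠ 0 := inv_ne_zero hrne
  have hcomp := intervalIntegral.integral_comp_mul_add
      (a := 1 + c - 2*Real.sqrt c) (b := 1 + c + 2*Real.sqrt c)
      (f := fun t => 2 * Real.sqrt c * Real.sqrt (1 - t^2)) hinv (-((1+c)/(2*Real.sqrt c)))
  have e1 : KK c 0 = ∫ x in (1 + c - 2*Real.sqrt c)..(1 + c + 2*Real.sqrt c),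
      (fun t => 2 * Real.sqrt c * Real.sqrt (1 - t^2))
        ((2*Real.sqrt c)⁻¹ * x + -((1+c)/(2*Real.sqrt c))) := by
    simp only [KK, pow_zero, one_mul]
    apply intervalIntegral.integral_congr
    intro x _
    simp only
    have harg : (2*Real.sqrt c)⁻¹ * x + -((1+c)/(2*Real.sqrt c)) = (x - (1+c)) / (2*Real.sqrt c) := by
      field_simp
      ring
    rw [harg]
    have h1 : 4*c - (x - (1+c))^2 = (2*Real.sqrt c)^2 * (1 - ((x - (1+c))/(2*Real.sqrt c))^2) := by
      field_simp
      nlinarith [hs]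
    rw [h1, Real.sqrt_mul (sq_nonneg _), Real.sqrt_sq hr.le]
  rw [e1, hcomp]
  have hA : (2*Real.sqrt c)⁻¹ * (1 + c - 2*Real.sqrt c) + -((1+c)/(2*Real.sqrt c)) = -1 := by
    field_simp
    ring
  have hB : (2*Real.sqrt c)⁻¹ * (1 + c + 2*Real.sqrt c) + -((1+c)/(2*Real.sqrt c)) = 1 := by
    field_simp
    ring
  rw [hA, hB, inv_inv, intervalIntegral.integral_const_mul, integral_sqrt_one_sub_sq]
  simp only [smul_eq_mul]
  linear_combination (2 * Real.pi) * hs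

lemma KK_one (hc : 0 < c) : KK c 1 = (1+c) * KK c 0 := by
  have h := ftc hc 0
  set a := 1 + c - 2*Real.sqrt c
  set b := 1 + c + 2*Real.sqrt c
  have e : Set.EqOn
      (fun x : ℝ => (3*(1+c)) * (x ^ 0 * Real.sqrt (4*c - (x - (1+c))^2))
        - 3 * (x ^ 1 * Real.sqrt (4*c - (x - (1+c))^2)))
      (fun x : ℝ => ((0:ℕ):ℝ) * x ^ (0-1) * (4*c - (x - (1+c))^2) * Real.sqrt (4*c - (x - (1+c))^2)
        - 3 * x ^ 0 * (x - (1+c)) * Real.sqrt (4*c - (x - (1+c))^2))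
      (Set.uIcc a b) := by
    intro x _
    push_cast
    ring
  rw [← intervalIntegral.integral_congr e] at h
  rw [intervalIntegral.integral_sub ((intK hc 0).const_mul _) ((intK hc 1).const_mul _),
      intervalIntegral.integral_const_mul, intervalIntegral.integral_const_mul] at h
  simp only [KK]
  linarith [h]


noncomputable def na (q : ℕ) : ℕ → ℝ
  | 0 => 0
  | (k+1) => (q.choose (k+1) * q.choose k : ℝ) / q

def sh (f : ℕ → ℝ) : ℕ → ℝ
  | 0 => 0
  | (k+1) => f k

noncomputable def T (c : ℝ) (q : ℕ) : ℝ := ∑ k ∈ Finset.range (q+1), na q k * c ^ k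

lemma choose_cast_succ (n k : ℕ) :
    ((n.choose (k+1) : ℝ)) * ((k:ℝ)+1) = (n.choose k : ℝ) * ((n:ℝ) - k) := by
  rcases le_or_gt k n with h | h
  · have h1 := Nat.choose_succ_right_eq n k
    have h2 : ((n.choose (k+1) * (k+1) : ℕ) : ℝ) = ((n.choose k * (n-k) : ℕ) : ℝ) := by
      exact_mod_cast congrArg (Nat.cast : ℕ → ℝ) h1
    rw [Nat.cast_mul, Nat.cast_mul, Nat.cast_sub h] at h2
    push_cast at h2 ⊢
    linarith
  · have h1 : n.choose (k+1) = 0 := Nat.choose_eq_zero_of_lt (by omega)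
    have h2 : n.choose k = 0 := Nat.choose_eq_zero_of_lt h
    simp [h1, h2]

lemma choose_cast_absorb (n k : ℕ) :
    ((n:ℝ)+1) * (n.choose k : ℝ) = ((n+1).choose (k+1) : ℝ) * ((k:ℝ)+1) := by
  have h1 := Nat.add_one_mul_choose_eq n k
  have h2 : (((n+1) * n.choose k : ℕ) : ℝ) = (((n+1).choose (k+1) * (k+1) : ℕ) : ℝ) := by
    exact_mod_cast congrArg (Nat.cast : ℕ → ℝ) h1
  push_cast at h2 ⊢
  linarith

lemma na_rec (m k : ℕ) :
    ((m:ℝ)+4) * na (m+3) k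
      = (2*(m:ℝ)+5) * (na (m+2) k + sh (na (m+2)) k)
        + ((m:ℝ)+1) * (2 * sh (na (m+1)) k - na (m+1) k - sh (sh (na (m+1))) k) := by
  have hm1 : ((m:ℝ)+1) ≠ 0 := by positivity
  have hm2 : ((m:ℝ)+2) ≠ 0 := by positivity
  have hm3 : ((m:ℝ)+3) ≠ 0 := by positivity
  match k with
  | 0 => simp [na, sh]
  | 1 =>
    simp only [na, sh, zero_add, Nat.choose_one_right, Nat.choose_zero_right]
    push_cast
    field_simp
    ring
  | 2 =>
    have c2 : ∀ q : ℕ, (q.choose 2 : ℝ) = (q:ℝ) * ((q:ℝ)-1) / 2 := by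
      intro q
      rw [eq_div_iff (two_ne_zero)]
      have h := choose_cast_succ q 1
      simp only [Nat.choose_one_right] at h
      push_cast at h ⊢
      linarith
    simp only [na, sh, zero_add, Nat.choose_one_right, Nat.choose_zero_right, c2]
    push_cast
    field_simp
    ring
  | (i+3) =>
    have hi1 : ((i:ℝ)+1) ≠ 0 := by positivity
    have hi2 : ((i:ℝ)+2) ≠ 0 := by positivity
    have hi3 : ((i:ℝ)+3) ≠ 0 := by positivity
    have e1 : (((m+1).choose (i+1) : ℕ) : ℝ)
        = ((m:ℝ)+1-i) * (((m+1).choose i : ℕ) : ℝ) / ((i:ℝ)+1) := by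
      have h := choose_cast_succ (m+1) i
      push_cast at h
      rw [eq_div_iff hi1]
      push_cast
      linear_combination h
    have e2 : (((m+1).choose (i+2) : ℕ) : ℝ)
        = ((m:ℝ)-i) * (((m+1).choose (i+1) : ℕ) : ℝ) / ((i:ℝ)+2) := by
      have h := choose_cast_succ (m+1) (i+1)
      push_cast at h
      rw [eq_div_iff hi2]
      push_cast
      linear_combination h
    have e3 : (((m+1).choose (i+3) : ℕ) : ℝ)
        = ((m:ℝ)-1-i) * (((m+1).choose (i+2) : ℕ) : ℝ) / ((i:ℝ)+3) := by
      have h := choose_cast_succ (m+1) (i+2)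
      push_cast at h
      rw [eq_div_iff hi3]
      push_cast
      linear_combination h
    have f1 : (((m+2).choose (i+1) : ℕ) : ℝ)
        = ((m:ℝ)+2) * (((m+1).choose i : ℕ) : ℝ) / ((i:ℝ)+1) := by
      have h := choose_cast_absorb (m+1) i
      push_cast at h
      rw [eq_div_iff hi1]
      push_cast
      linear_combination - h
    have f2 : (((m+2).choose (i+2) : ℕ) : ℝ)
        = ((m:ℝ)+2) * (((m+1).choose (i+1) : ℕ) : ℝ) / ((i:ℝ)+2) := by
      have h := choose_cast_absorb (m+1) (i+1)
      push_cast at h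
      rw [eq_div_iff hi2]
      push_cast
      linear_combination - h
    have f3 : (((m+2).choose (i+3) : ℕ) : ℝ)
        = ((m:ℝ)+2) * (((m+1).choose (i+2) : ℕ) : ℝ) / ((i:ℝ)+3) := by
      have h := choose_cast_absorb (m+1) (i+2)
      push_cast at h
      rw [eq_div_iff hi3]
      push_cast
      linear_combination - h
    have g2 : (((m+3).choose (i+2) : ℕ) : ℝ)
        = ((m:ℝ)+3) * (((m+2).choose (i+1) : ℕ) : ℝ) / ((i:ℝ)+2) := by
      have h := choose_cast_absorb (m+2) (i+1)
      push_cast at h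
      rw [eq_div_iff hi2]
      push_cast
      linear_combination - h
    have g3 : (((m+3).choose (i+3) : ℕ) : ℝ)
        = ((m:ℝ)+3) * (((m+2).choose (i+2) : ℕ) : ℝ) / ((i:ℝ)+3) := by
      have h := choose_cast_absorb (m+2) (i+2)
      push_cast at h
      rw [eq_div_iff hi3]
      push_cast
      linear_combination - h
    simp only [na, sh]
    rw [g3, g2, f3, f2, f1, e3, e2, e1]
    push_cast
    field_simp
    ring


lemma na_eq_zero {q k : ℕ} (h : q < k) : na q k = 0 := by
  match k with
  | 0 => simp [na]
  | (j+1) =>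
    have : q.choose (j+1) = 0 := Nat.choose_eq_zero_of_lt (by omega)
    simp [na, this]

lemma shift_sum (c : ℝ) (f : ℕ → ℝ) (n : ℕ) :
    c * ∑ k ∈ Finset.range n, f k * c ^ k = ∑ k ∈ Finset.range (n+1), sh f k * c ^ k := by
  rw [Finset.sum_range_succ']
  simp only [sh, pow_zero, mul_one, mul_zero, zero_mul, add_zero]
  rw [Finset.mul_sum]
  apply Finset.sum_congr rfl
  intro k _
  ring

lemma T_rec (c : ℝ) (m : ℕ) :
    ((m:ℝ)+4) * T c (m+3)
      = (2*(m:ℝ)+5)*(1+c)*T c (m+2) + ((m:ℝ)+1)*(4*c-(1+c)^2)*T c (m+1) := by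
  have hA : T c (m+3) = ∑ k ∈ Finset.range (m+4), na (m+3) k * c ^ k := rfl
  have hB0 : T c (m+2) = ∑ k ∈ Finset.range (m+4), na (m+2) k * c ^ k := by
    rw [T, Finset.sum_range_succ _ (m+3), na_eq_zero (by omega)]
    simp
  have hB1 : c * T c (m+2) = ∑ k ∈ Finset.range (m+4), sh (na (m+2)) k * c ^ k := by
    rw [T]
    exact shift_sum c _ (m+3)
  have hC0 : T c (m+1) = ∑ k ∈ Finset.range (m+4), na (m+1) k * c ^ k := by
    rw [T, Finset.sum_range_succ _ (m+3), Finset.sum_range_succ _ (m+2),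
      na_eq_zero (show m+1 < m+3 by omega), na_eq_zero (show m+1 < m+2 by omega)]
    simp
  have hC1 : c * T c (m+1) = ∑ k ∈ Finset.range (m+4), sh (na (m+1)) k * c ^ k := by
    rw [T, shift_sum c _ (m+2), Finset.sum_range_succ _ (m+3)]
    have : sh (na (m+1)) (m+3) = na (m+1) (m+2) := rfl
    rw [this, na_eq_zero (show m+1 < m+2 by omega)]
    simp
  have hC2 : c^2 * T c (m+1) = ∑ k ∈ Finset.range (m+4), sh (sh (na (m+1))) k * c ^ k := by
    have h1 : c * T c (m+1) = ∑ k ∈ Finset.range (m+3), sh (na (m+1)) k * c ^ k := by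
      rw [T]
      exact shift_sum c _ (m+2)
    have : c^2 * T c (m+1) = c * (c * T c (m+1)) := by ring
    rw [this, h1]
    exact shift_sum c _ (m+3)
  have hsum : ((m:ℝ)+4) * (∑ k ∈ Finset.range (m+4), na (m+3) k * c ^ k)
      = (2*(m:ℝ)+5) * ((∑ k ∈ Finset.range (m+4), na (m+2) k * c ^ k)
            + (∑ k ∈ Finset.range (m+4), sh (na (m+2)) k * c ^ k))
        + ((m:ℝ)+1) * (2 * (∑ k ∈ Finset.range (m+4), sh (na (m+1)) k * c ^ k)
            - (∑ k ∈ Finset.range (m+4), na (m+1) k * c ^ k)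
            - (∑ k ∈ Finset.range (m+4), sh (sh (na (m+1))) k * c ^ k)) := by
    rw [Finset.mul_sum]
    rw [show (∑ k ∈ Finset.range (m+4), ((m:ℝ)+4) * (na (m+3) k * c ^ k))
        = ∑ k ∈ Finset.range (m+4),
            ((2*(m:ℝ)+5) * (na (m+2) k + sh (na (m+2)) k)
              + ((m:ℝ)+1) * (2 * sh (na (m+1)) k - na (m+1) k - sh (sh (na (m+1))) k)) * c ^ k
      from Finset.sum_congr rfl (fun k _ => by linear_combination (c^k) * (na_rec m k))]
    simp only [add_mul, sub_mul, mul_sub, mul_add, Finset.sum_add_distrib, Finset.sum_sub_distrib,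
      ← Finset.mul_sum, mul_assoc]
  rw [← hA, ← hB0, ← hB1, ← hC0, ← hC1, ← hC2] at hsum
  linear_combination hsum


lemma T_one : T c 1 = c := by
  simp [T, Finset.sum_range_succ, na]

lemma T_two : T c 2 = c + c^2 := by
  simp [T, Finset.sum_range_succ, na]

lemma KK_eq (hc : 0 < c) (n : ℕ) : KK c n = 2*Real.pi*T c (n+1) := by
  induction n using Nat.strong_induction_on with
  | _ n ih =>
    match n with
    | 0 => rw [KK_zero hc, T_one]
    | 1 => rw [KK_one hc, KK_zero hc, T_two]; ring
    | (m+2) =>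
      have h1 := KK_rec hc m
      have h2 := T_rec c m
      have e0 : KK c m = 2*Real.pi*T c (m+1) := ih m (by omega)
      have e1 : KK c (m+1) = 2*Real.pi*T c (m+2) := ih (m+1) (by omega)
      have hm4 : ((m:ℝ)+4) ≠ 0 := by positivity
      show KK c (m+2) = 2*Real.pi*T c (m+3)
      apply mul_left_cancel₀ hm4
      rw [h1, e0, e1]
      linear_combination (-2)*Real.pi*h2

end MP

/-- For every `c > 0` and `p ≥ 1`, the `p`-th moment of the
Marchenko–Pastur measure `π_c` equals the Narayana polynomial
`∑_{k=1}^p (1/p) binom(p,k) binom(p,k-1) c^k`. -/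
theorem mpMeasure_moments (c : ℝ) (hc : 0 < c) (p : ℕ) (hp : 1 ≤ p) :
    ∫ x, x ^ p ∂(mpMeasure c) =
      ∑ k ∈ Finset.Icc 1 p,
        (1 / (p : ℝ)) * (p.choose k : ℝ) * (p.choose (k - 1) : ℝ) * c ^ k := by
  obtain ⟨n, rfl⟩ : ∃ n, p = n + 1 := ⟨p - 1, by omega⟩
  have hs := MP.sqrtc_sq hc
  have hsnn := Real.sqrt_nonneg c
  have ha0 : 0 ≤ 1 + c - 2*Real.sqrt c := by nlinarith [sq_nonneg (1 - Real.sqrt c)]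
  have hab : 1 + c - 2*Real.sqrt c ≤ 1 + c + 2*Real.sqrt c := by linarith
  have hmeas : Measurable (mpDensity c) := by
    unfold mpDensity
    refine Measurable.ite ?_ ?_ measurable_const
    · exact measurableSet_Icc (a := 1 + c - 2*Real.sqrt c) (b := 1 + c + 2*Real.sqrt c)
    · exact ((continuous_const.sub
          (((continuous_id.sub continuous_const).sub continuous_const).pow 2)).sqrt).measurable.div
        (continuous_const.mul continuous_id).measurable
  have hnn : ∀ x, 0 ≤ mpDensity c x := by
    intro x
    unfold mpDensity
    split
    · rename_i h
      have hx0 : 0 ≤ x := le_trans ha0 h.1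
      have := Real.sqrt_nonneg (4 * c - (x - 1 - c) ^ 2)
      have hpi := Real.pi_pos
      positivity
    · exact le_rfl
  have hkey : ∀ x : ℝ, (mpDensity c x) * x ^ (n+1)
      = Set.indicator (Set.Icc (1 + c - 2*Real.sqrt c) (1 + c + 2*Real.sqrt c))
          (fun x => x ^ n * Real.sqrt (4*c - (x - (1+c))^2) / (2*Real.pi)) x := by
    intro x
    unfold mpDensity
    by_cases hx : x ∈ Set.Icc (1 + c - 2*Real.sqrt c) (1 + c + 2*Real.sqrt c)
    · rw [Set.indicator_of_mem hx, if_pos (⟨hx.1, hx.2⟩ : _ ∧ _)]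
      have harg : 4*c - (x-1-c)^2 = 4*c - (x-(1+c))^2 := by ring
      rw [harg]
      rcases eq_or_ne x 0 with rfl | hx0
      · have hx1 := hx.1
        have hc1 : Real.sqrt c = 1 := by nlinarith
        have hcc : c = 1 := by nlinarith
        rw [hcc]
        norm_num
      · rw [pow_succ]
        field_simp
        ring
    · rw [Set.indicator_of_notMem hx, if_neg (fun h => hx ⟨h.1, h.2⟩), zero_mul]
  have cont1 : Continuous (fun x : ℝ => x ^ n * Real.sqrt (4*c - (x - (1+c))^2) / (2*Real.pi)) :=
    ((continuous_pow n).mul MP.g_cont).div_const _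
  have hInd : Integrable (Set.indicator (Set.Icc (1 + c - 2*Real.sqrt c) (1 + c + 2*Real.sqrt c))
      (fun x => x ^ n * Real.sqrt (4*c - (x - (1+c))^2) / (2*Real.pi))) volume :=
    (integrable_indicator_iff measurableSet_Icc).2 cont1.integrableOn_Icc
  have hmeasNN : Measurable fun x => (mpDensity c x).toNNReal := hmeas.real_toNNReal
  have hsmul_eq : (fun x : ℝ => (mpDensity c x).toNNReal • x ^ (n+1))
      = Set.indicator (Set.Icc (1 + c - 2*Real.sqrt c) (1 + c + 2*Real.sqrt c))
          (fun x => x ^ n * Real.sqrt (4*c - (x - (1+c))^2) / (2*Real.pi)) := by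
    funext x
    rw [NNReal.smul_def, Real.coe_toNNReal _ (hnn x)]
    exact hkey x
  have hwd : (volume.withDensity fun x => ENNReal.ofReal (mpDensity c x))
      = volume.withDensity (fun x => ((mpDensity c x).toNNReal : ENNReal)) := rfl
  have hIdirac : Integrable (fun x : ℝ => x ^ (n+1)) (Measure.dirac 0) := by
    refine (integrable_const ((0:ℝ) ^ (n+1))).congr ?_
    rw [ae_dirac_eq]
    exact Filter.eventually_pure.2 rfl
  have hI1 : Integrable (fun x : ℝ => x ^ (n+1)) (ENNReal.ofReal (max (1-c) 0) • Measure.dirac 0) :=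
    hIdirac.smul_measure ENNReal.ofReal_ne_top
  have hI2 : Integrable (fun x : ℝ => x ^ (n+1))
      (volume.withDensity fun x => ENNReal.ofReal (mpDensity c x)) := by
    rw [hwd, integrable_withDensity_iff_integrable_smul hmeasNN]
    have : (fun x : ℝ => (mpDensity c x).toNNReal • x ^ (n+1)) = _ := hsmul_eq
    rw [this]
    exact hInd
  have hsplit : ∫ x, x ^ (n+1) ∂(mpMeasure c)
      = (∫ x, x ^ (n+1) ∂(ENNReal.ofReal (max (1-c) 0) • Measure.dirac 0))
        + ∫ x, x ^ (n+1) ∂(volume.withDensity fun x => ENNReal.ofReal (mpDensity c x)) := by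
    rw [mpMeasure]
    exact integral_add_measure hI1 hI2
  rw [hsplit]
  have hdirac : (∫ x : ℝ, x ^ (n+1) ∂(ENNReal.ofReal (max (1-c) 0) • Measure.dirac (0:ℝ))) = 0 := by
    rw [MeasureTheory.integral_smul_measure, integral_dirac]
    simp
  have hwdint : (∫ x, x ^ (n+1) ∂(volume.withDensity fun x => ENNReal.ofReal (mpDensity c x)))
      = MP.KK c n / (2*Real.pi) := by
    rw [hwd, integral_withDensity_eq_integral_smul hmeasNN]
    rw [show (fun x : ℝ => (mpDensity c x).toNNReal • x ^ (n+1)) = _ from hsmul_eq]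
    rw [MeasureTheory.integral_indicator measurableSet_Icc, integral_Icc_eq_integral_Ioc,
      ← intervalIntegral.integral_of_le hab, intervalIntegral.integral_div]
    rfl
  rw [hdirac, hwdint, MP.KK_eq hc n, zero_add]
  have hpi : (2*Real.pi) ≠ 0 := by positivity
  rw [mul_comm (2*Real.pi) (MP.T c (n+1)), mul_div_assoc, div_self hpi, mul_one]
  rw [MP.T, Finset.sum_range_succ']
  rw [← Finset.Ico_add_one_right_eq_Icc 1 (n+1), Finset.sum_Ico_eq_sum_range]
  simp only [MP.na, pow_zero, mul_one, add_zero, Nat.add_sub_cancel]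
  apply Finset.sum_congr
  · norm_num
  · intro k _
    simp only [Nat.add_sub_cancel_left, pow_succ]
    push_cast
    have h1 : ((n:ℝ)+1) ≠ 0 := by positivity
    field_simp
    ring
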